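/- For every natural number m, the real polynomial x³ + (m+7)x² + (5m+12)x + (5m+4) has only real roots. -/

import Mathlib

open Polynomial

/-- `numIndepPartitions G i` is the number of partitions of the vertex set of `G` into
exactly `i` nonempty independent sets, encoded as the number of setoids (equivalence
relations) on `V` with exactly `i` equivalence classes, each class being an independent
set of `G`. -/
noncomputable def numIndepPartitions {V : Type*} (G : SimpleGraph V) (i : ℕ) : ℕ :=
  Nat.card {P : Setoid V // Nat.card (Quotient P) = i ∧
    ∀ c ∈ P.classes, c.Pairwise fun u v => ¬ G.Adj u v}

/-- The σ-polynomial of a finite simple graph `G`: `σ(G,x) = ∑ aᵢ xⁱ` where `aᵢ` is the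
number of partitions of the vertex set of `G` into `i` nonempty independent sets. -/
noncomputable def sigmaPoly {V : Type*} [Finite V] (G : SimpleGraph V) : Polynomial ℝ :=
  ∑ i ∈ Finset.range (Nat.card V + 1), (numIndepPartitions G i : ℝ) • X ^ i

theorem cubic_F2m_splits (m : ℕ) :
    (X ^ 3 + C ((m : ℝ) + 7) * X ^ 2 + C (5 * (m : ℝ) + 12) * X +
        C (5 * (m : ℝ) + 4)).Splits := by
  set p : Polynomial ℝ := X ^ 3 + C ((m : ℝ) + 7) * X ^ 2 + C (5 * (m : ℝ) + 12) * X +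
      C (5 * (m : ℝ) + 4) with hp
  have hdeg : p.natDegree = 3 := by
    rw [hp]; compute_degree!
  have hne : p ≠ 0 := fun h => by simp [h] at hdeg
  have heval : ∀ x : ℝ, p.eval x = x ^ 3 + ((m:ℝ) + 7) * x ^ 2 + (5*(m:ℝ)+12) * x + (5*(m:ℝ)+4) := by
    intro x; simp [hp]
  have hm : (0:ℝ) ≤ (m:ℝ) := Nat.cast_nonneg m
  have h1 : p.eval (-((m:ℝ)+8)) < 0 := by rw [heval]; nlinarith
  have h2 : 0 < p.eval (-4) := by rw [heval]; nlinarith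
  have h3 : p.eval (-(3/2)) < 0 := by rw [heval]; nlinarith
  have h4 : 0 < p.eval 0 := by rw [heval]; nlinarith
  have hc : Continuous fun x : ℝ => p.eval x := p.continuous
  -- root 1 in Icc (-(m+8)) (-4)
  obtain ⟨r1, hr1m, hr1⟩ : ∃ r ∈ Set.Icc (-((m:ℝ)+8)) (-4), p.eval r = 0 := by
    have := intermediate_value_Icc (by nlinarith : (-((m:ℝ)+8)) ≤ -4) hc.continuousOn
    obtain ⟨r, hr, hre⟩ := this ⟨h1.le, h2.le⟩
    exact ⟨r, hr, hre⟩
  obtain ⟨r2, hr2m, hr2⟩ : ∃ r ∈ Set.Icc (-4 : ℝ) (-(3/2)), p.eval r = 0 := by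
    have := intermediate_value_Icc' (by norm_num : (-4:ℝ) ≤ -(3/2)) hc.continuousOn
    obtain ⟨r, hr, hre⟩ := this ⟨h3.le, h2.le⟩
    exact ⟨r, hr, hre⟩
  obtain ⟨r3, hr3m, hr3⟩ : ∃ r ∈ Set.Icc (-(3/2) : ℝ) 0, p.eval r = 0 := by
    have := intermediate_value_Icc (by norm_num : (-(3/2):ℝ) ≤ 0) hc.continuousOn
    obtain ⟨r, hr, hre⟩ := this ⟨h3.le, h4.le⟩
    exact ⟨r, hr, hre⟩
  have h12 : r1 ≠ r2 := by
    rintro rfl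
    have : r1 = -4 := le_antisymm hr1m.2 hr2m.1
    rw [this] at hr1; linarith
  have h23 : r2 ≠ r3 := by
    rintro rfl
    have : r2 = -(3/2) := le_antisymm hr2m.2 hr3m.1
    rw [this] at hr2; linarith
  have h13 : r1 ≠ r3 := by
    intro h
    have : r1 ≤ -(3/2) := by linarith [hr1m.2]
    have h2' : (-(3/2):ℝ) ≤ r3 := hr3m.1
    have : r1 = -(3/2) := by rw [h]; linarith [h ▸ this]
    rw [this] at hr1; linarith
  -- card of roots
  have hmem : ∀ r, p.eval r = 0 → r ∈ p.roots := fun r h => mem_roots'.2 ⟨hne, h⟩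
  have hsub : ({r1, r2, r3} : Finset ℝ) ⊆ p.roots.toFinset := by
    intro x hx
    simp only [Finset.mem_insert, Finset.mem_singleton] at hx
    rw [Multiset.mem_toFinset]
    rcases hx with rfl | rfl | rfl
    · exact hmem _ hr1
    · exact hmem _ hr2
    · exact hmem _ hr3
  have hcard3 : ({r1, r2, r3} : Finset ℝ).card = 3 := by
    rw [Finset.card_insert_of_notMem (by simp [h12, h13]),
        Finset.card_insert_of_notMem (by simp [h23])]
    simp
  have hle : 3 ≤ p.roots.card := by
    calc 3 = ({r1, r2, r3} : Finset ℝ).card := hcard3.symm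
      _ ≤ p.roots.toFinset.card := Finset.card_le_card hsub
      _ ≤ p.roots.card := p.roots.toFinset_card_le
  have hge : p.roots.card ≤ 3 := hdeg ▸ p.card_roots' 
  rw [splits_iff_card_roots, hdeg]
  omega
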